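/- If X is a θⁿ-Urysohn topological space, then |X| ≤ d_γⁿ(X)^(ψ_γⁿ(X)·t_γⁿ(X)), where d_γⁿ(X) is the n-γ-density of X. -/

import Mathlib

open Set Topology Cardinal

universe u v

def thetaCl (X : Type u) [TopologicalSpace X] (A : Set X) : Set X :=
  {x | ∀ U : Set X, IsOpen U → x ∈ U → (closure U ∩ A).Nonempty}

def thetaClN (X : Type u) [TopologicalSpace X] (n : ℕ) (A : Set X) : Set X :=
  (thetaCl X)^[n] A

def gammaCl (X : Type u) [TopologicalSpace X] (n : ℕ) (A : Set X) : Set X :=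
  {x | ∀ U : Set X, IsOpen U → x ∈ U → (thetaClN X n U ∩ A).Nonempty}

def ThetaUrysohn (X : Type u) [TopologicalSpace X] (n : ℕ) : Prop :=
  ∀ x y : X, x ≠ y → ∃ U V : Set X, IsOpen U ∧ IsOpen V ∧ x ∈ U ∧ y ∈ V ∧
    thetaClN X n U ∩ thetaClN X n V = ∅

noncomputable def tGamma (X : Type u) [TopologicalSpace X] (n : ℕ) : Cardinal.{u} :=
  sInf {κ | ∀ (x : X) (A : Set X), x ∈ gammaCl X n A →
    ∃ B ⊆ A, #B ≤ κ ∧ x ∈ gammaCl X n B}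

noncomputable def psiGamma (X : Type u) [TopologicalSpace X] (n : ℕ) : Cardinal.{u} :=
  ⨆ x : X, sInf {κ | ∃ B : Set (Set X), #B ≤ κ ∧ (∀ U ∈ B, IsOpen U ∧ x ∈ U) ∧
    (⋂ U ∈ B, gammaCl X n (thetaClN X n U)) = {x}}

noncomputable def dGamma (X : Type u) [TopologicalSpace X] (n : ℕ) : Cardinal.{u} :=
  sInf {κ | ∃ A : Set X, #A ≤ κ ∧ gammaCl X n A = Set.univ}

variable {X : Type u} [TopologicalSpace X]

lemma subset_thetaCl (A : Set X) : A ⊆ thetaCl X A := by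
  intro x hx U hU hxU
  exact ⟨x, subset_closure hxU, hx⟩

lemma subset_thetaClN (n : ℕ) (A : Set X) : A ⊆ thetaClN X n A := by
  induction n with
  | zero => exact fun x hx => hx
  | succ n ih =>
    intro x hx
    have : thetaClN X (n+1) A = thetaCl X (thetaClN X n A) :=
      Function.iterate_succ_apply' _ _ _
    rw [this]
    exact subset_thetaCl _ (ih hx)

lemma thetaCl_mono {A B : Set X} (h : A ⊆ B) : thetaCl X A ⊆ thetaCl X B := by
  intro x hx U hU hxU
  obtain ⟨z, hz1, hz2⟩ := hx U hU hxU
  exact ⟨z, hz1, h hz2⟩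

lemma thetaClN_mono (n : ℕ) {A B : Set X} (h : A ⊆ B) :
    thetaClN X n A ⊆ thetaClN X n B := by
  induction n with
  | zero => exact h
  | succ n ih =>
    have e : ∀ C : Set X, thetaClN X (n+1) C = thetaCl X (thetaClN X n C) :=
      fun C => Function.iterate_succ_apply' _ _ _
    rw [e A, e B]
    exact thetaCl_mono ih

lemma gammaCl_mono (n : ℕ) {A B : Set X} (h : A ⊆ B) :
    gammaCl X n A ⊆ gammaCl X n B := by
  intro x hx U hU hxU
  obtain ⟨z, hz1, hz2⟩ := hx U hU hxU
  exact ⟨z, hz1, h hz2⟩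

lemma nonempty_of_mem_gammaCl {n : ℕ} {A : Set X} {x : X} (hx : x ∈ gammaCl X n A) :
    A.Nonempty := by
  obtain ⟨z, _, hz⟩ := hx Set.univ isOpen_univ (Set.mem_univ x)
  exact ⟨z, hz⟩

lemma mem_gammaCl_inter {n : ℕ} {D U : Set X} {x : X}
    (hD : gammaCl X n D = Set.univ) (hU : IsOpen U) (hxU : x ∈ U) :
    x ∈ gammaCl X n (D ∩ thetaClN X n U) := by
  intro W hW hxW
  have hx : x ∈ gammaCl X n D := hD ▸ Set.mem_univ x
  obtain ⟨z, hz1, hz2⟩ := hx (W ∩ U) (hW.inter hU) ⟨hxW, hxU⟩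
  exact ⟨z, thetaClN_mono n inter_subset_left hz1,
    hz2, thetaClN_mono n inter_subset_right hz1⟩

/-- counting lemma, core version -/
lemma mk_small_nonempty_subsets (β : Type u) (c : Cardinal.{u}) :
    #{a : Set β // a.Nonempty ∧ #a ≤ c} ≤ #β ^ c := by
  have hF : ∀ a : {a : Set β // a.Nonempty ∧ #a ≤ c},
      ∃ g : c.out → β, a.1 = Set.range g := by
    classical
    rintro ⟨a, hne, hc⟩
    have : #a ≤ #(c.out) := by rw [mk_out]; exact hc
    obtain ⟨f⟩ := Cardinal.le_def _ _ |>.mp this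
    refine ⟨fun i => if h : ∃ z : a, f z = i then (h.choose : β) else hne.choose, ?_⟩
    ext z
    constructor
    · intro hz
      refine ⟨f ⟨z, hz⟩, ?_⟩
      have h : ∃ w : a, f w = f ⟨z, hz⟩ := ⟨⟨z, hz⟩, rfl⟩
      simp only [dif_pos h]
      have := f.injective h.choose_spec
      rw [this]
    · rintro ⟨i, rfl⟩
      by_cases h : ∃ w : a, f w = i
      · simp only [dif_pos h]; exact h.choose.2
      · simp only [dif_neg h]; exact hne.choose_spec
  choose F hFs using hF
  have hinj : Function.Injective F := by
    intro a b hab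
    apply Subtype.ext
    rw [hFs a, hFs b, hab]
  calc #{a : Set β // a.Nonempty ∧ #a ≤ c} ≤ #(c.out → β) := mk_le_of_injective hinj
    _ = #β ^ c := by rw [← power_def, mk_out]

lemma mk_small_nonempty_subsets_of (α : Type u) (s : Set α) (c : Cardinal.{u}) :
    #{a : Set α // a ⊆ s ∧ a.Nonempty ∧ #a ≤ c} ≤ #s ^ c := by
  refine le_trans ?_ (mk_small_nonempty_subsets (↥s) c)
  refine mk_le_of_injective (f := fun a => ⟨Subtype.val ⁻¹' a.1, ?_, ?_⟩) ?_
  · obtain ⟨z, hz⟩ := a.2.2.1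
    exact ⟨⟨z, a.2.1 hz⟩, hz⟩
  · exact le_trans (mk_preimage_of_injective _ _ Subtype.val_injective) a.2.2.2
  · rintro ⟨a, ha⟩ ⟨b, hb⟩ hab
    simp only [Subtype.mk.injEq] at hab ⊢
    have : Subtype.val '' (Subtype.val ⁻¹' a : Set s) = Subtype.val '' (Subtype.val ⁻¹' b : Set s) := by
      rw [hab]
    rwa [Subtype.image_preimage_coe, Subtype.image_preimage_coe,
      inter_eq_self_of_subset_right ha.1, inter_eq_self_of_subset_right hb.1] at this


theorem card_le_dGamma_pow (X : Type u) [TopologicalSpace X] (n : ℕ)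
    (hX : ThetaUrysohn X n) :
    #X ≤ dGamma X n ^ (psiGamma X n * tGamma X n) := by
  classical
  rcases isEmpty_or_nonempty X with hE | hNE
  · rw [Cardinal.mk_eq_zero X]; exact zero_le
  set d := dGamma X n with hd
  set t := tGamma X n with ht'
  set ψ := psiGamma X n with hψ
  -- dense set
  have hgu : gammaCl X n (Set.univ : Set X) = Set.univ := by
    apply Set.eq_univ_of_univ_subset
    intro x _ U hU hxU
    exact ⟨x, subset_thetaClN n U hxU, Set.mem_univ x⟩
  have hdmem : d ∈ {κ | ∃ A : Set X, #A ≤ κ ∧ gammaCl X n A = Set.univ} :=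
    csInf_mem ⟨#(Set.univ : Set X), Set.univ, le_rfl, hgu⟩
  obtain ⟨D, hD1, hD2⟩ := hdmem
  -- tightness
  have htmem : t ∈ {κ | ∀ (x : X) (A : Set X), x ∈ gammaCl X n A →
      ∃ B ⊆ A, #B ≤ κ ∧ x ∈ gammaCl X n B} :=
    csInf_mem ⟨#X, fun x A hx => ⟨A, Set.Subset.rfl, Cardinal.mk_set_le A, hx⟩⟩
  -- pseudobases
  have hpsix : ∀ x : X, ∃ B : Set (Set X), #B ≤ ψ ∧ (∀ U ∈ B, IsOpen U ∧ x ∈ U) ∧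
      (⋂ U ∈ B, gammaCl X n (thetaClN X n U)) = {x} := by
    intro x
    set B₀ : Set (Set X) := {U | IsOpen U ∧ x ∈ U} with hB₀
    have hB₀prop : (⋂ U ∈ B₀, gammaCl X n (thetaClN X n U)) = {x} := by
      apply Set.Subset.antisymm
      · intro y hy
        by_contra hne
        have hyx : x ≠ y := fun h => hne (h ▸ rfl)
        obtain ⟨U, V, hUo, hVo, hxU, hyV, hUV⟩ := hX x y hyx
        have hyU : y ∈ gammaCl X n (thetaClN X n U) := by
          have := Set.mem_iInter₂.mp hy U ⟨hUo, hxU⟩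
          exact this
        obtain ⟨z, hz1, hz2⟩ := hyU V hVo hyV
        exact Set.eq_empty_iff_forall_notMem.mp hUV z ⟨hz2, hz1⟩
      · intro y hy
        rw [Set.mem_singleton_iff] at hy
        subst hy
        apply Set.mem_iInter₂.mpr
        rintro U ⟨hUo, hxU⟩ W hWo hxW
        exact ⟨y, subset_thetaClN n W hxW, subset_thetaClN n U hxU⟩
    have hnex : {κ | ∃ B : Set (Set X), #B ≤ κ ∧ (∀ U ∈ B, IsOpen U ∧ x ∈ U) ∧
        (⋂ U ∈ B, gammaCl X n (thetaClN X n U)) = {x}}.Nonempty :=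
      ⟨#B₀, B₀, le_rfl, fun U hU => hU, hB₀prop⟩
    obtain ⟨B, hB1, hB2, hB3⟩ := csInf_mem hnex
    refine ⟨B, hB1.trans ?_, hB2, hB3⟩
    exact le_ciSup (Cardinal.bddAbove_range _) x
  choose V hV1 hV2 hV3 using hpsix
  -- tightness applied to D ∩ θⁿU
  have hAex : ∀ x : X, ∀ U : Set X, U ∈ V x → ∃ B : Set X,
      B ⊆ D ∩ thetaClN X n U ∧ #B ≤ t ∧ x ∈ gammaCl X n B := by
    intro x U hU
    have hx : x ∈ gammaCl X n (D ∩ thetaClN X n U) :=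
      mem_gammaCl_inter hD2 (hV2 x U hU).1 (hV2 x U hU).2
    exact htmem x _ hx
  choose A hA1 hA2 hA3 using hAex
  rcases subsingleton_or_nontrivial X with hsub | hnt
  · -- subsingleton case
    have h1 : #X ≤ 1 := Cardinal.le_one_iff_subsingleton.mpr hsub
    have hDne : D.Nonempty := by
      obtain ⟨x⟩ := hNE
      exact nonempty_of_mem_gammaCl (A := D) (n := n) (x := x) (hD2 ▸ Set.mem_univ x)
    have hd0 : d ≠ 0 := by
      intro h
      rw [h, le_zero_iff] at hD1
      have := Cardinal.mk_eq_zero_iff.mp hD1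
      exact this.false ⟨hDne.choose, hDne.choose_spec⟩
    exact h1.trans (Cardinal.one_le_iff_ne_zero.mpr (Cardinal.power_ne_zero _ hd0))
  · -- nontrivial case
    have hVne : ∀ x : X, (V x).Nonempty := by
      intro x
      rw [Set.nonempty_iff_ne_empty]
      intro h
      have h3 := hV3 x
      rw [h] at h3
      simp only [Set.mem_empty_iff_false, Set.iInter_of_empty, Set.iInter_univ] at h3
      obtain ⟨y, hy⟩ := exists_ne x
      exact hy (by rw [← Set.mem_singleton_iff, ← h3]; exact Set.mem_univ y)
    set Φ : X → Set (Set X) := fun x => {a | ∃ U : Set X, ∃ h : U ∈ V x, a = A x U h}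
      with hΦ
    have hΦinj : Function.Injective Φ := by
      intro x y hxy
      by_contra hne
      have hyx : y ∉ ({x} : Set X) := fun h => hne (Set.mem_singleton_iff.mp h).symm
      rw [← hV3 x] at hyx
      have : ∃ U, ∃ _ : U ∈ V x, y ∉ gammaCl X n (thetaClN X n U) := by
        by_contra hall
        push_neg at hall
        exact hyx (Set.mem_iInter₂.mpr hall)
      obtain ⟨U, hU, hyU⟩ := this
      have hmem : A x U hU ∈ Φ y := by rw [← hxy]; exact ⟨U, hU, rfl⟩
      obtain ⟨U', hU', hEq⟩ := hmem
      have hyg : y ∈ gammaCl X n (A x U hU) := by rw [hEq]; exact hA3 y U' hU'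
      exact hyU (gammaCl_mono n ((hA1 x U hU).trans Set.inter_subset_right) hyg)
    set P : Set (Set X) := {a | a ⊆ D ∧ a.Nonempty ∧ #a ≤ t} with hP
    have hΦP : ∀ x : X, Φ x ⊆ P := by
      rintro x a ⟨U, hU, rfl⟩
      exact ⟨(hA1 x U hU).trans Set.inter_subset_left,
        nonempty_of_mem_gammaCl (hA3 x U hU), hA2 x U hU⟩
    have hΦne : ∀ x : X, (Φ x).Nonempty := by
      intro x
      obtain ⟨U, hU⟩ := hVne x
      exact ⟨A x U hU, U, hU, rfl⟩
    have hΦcard : ∀ x : X, #(Φ x) ≤ ψ := by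
      intro x
      have hr : Φ x = Set.range (fun p : (V x) => A x p.1 p.2) := by
        ext a
        constructor
        · rintro ⟨U, h, rfl⟩; exact ⟨⟨U, h⟩, rfl⟩
        · rintro ⟨⟨U, h⟩, rfl⟩; exact ⟨U, h, rfl⟩
      calc #(Φ x) = #(Set.range (fun p : (V x) => A x p.1 p.2)) := by rw [hr]
        _ ≤ #(V x) := Cardinal.mk_range_le
        _ ≤ ψ := hV1 x
    set T := {S : Set (Set X) // S ⊆ P ∧ S.Nonempty ∧ #S ≤ ψ} with hT
    have hΦ'inj : Function.Injective (fun x : X =>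
        (⟨Φ x, hΦP x, hΦne x, hΦcard x⟩ : T)) := by
      intro x y hxy
      exact hΦinj (congrArg Subtype.val hxy)
    calc #X ≤ #T := Cardinal.mk_le_of_injective hΦ'inj
      _ ≤ #P ^ ψ := mk_small_nonempty_subsets_of (Set X) P ψ
      _ ≤ (#D ^ t) ^ ψ :=
        Cardinal.power_le_power_right (mk_small_nonempty_subsets_of X D t)
      _ ≤ (d ^ t) ^ ψ :=
        Cardinal.power_le_power_right (Cardinal.power_le_power_right hD1)
      _ = d ^ (ψ * t) := by rw [← Cardinal.power_mul, mul_comm]
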